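/- Let ⟨A, Δ⟩ be a Jordan coalgebra over a field k of characteristic not 2 whose dual algebra A* is unital, and let ⟨L(A), Δ_L⟩ be the Lie coalgebra of Theorem 1. If I is a subcoalgebra of ⟨L(A), Δ_L⟩, then B = A ∩ I is a subcoalgebra of ⟨A, Δ⟩, and I₁*(B) ⊆ I ⊆ I₂*(B). -/

import Mathlib

open TensorProduct

variable {k : Type*} [Field k] {A : Type*} [AddCommGroup A] [Module k A]

/-- The multiplication on the dual space `A*` induced by a comultiplication `Δ`:
`⟨fg, a⟩ = Σ ⟨f, a₍₁₎⟩⟨g, a₍₂₎⟩`. -/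
noncomputable def dmul (Δ : A →ₗ[k] A ⊗[k] A) (f g : (A →ₗ[k] k)) : (A →ₗ[k] k) :=
  (TensorProduct.lid k k).toLinearMap ∘ₗ TensorProduct.map f g ∘ₗ Δ

/-- The left action `f·a = Σ a₍₁₎ ⟨f, a₍₂₎⟩` of the dual algebra on `A`. -/
noncomputable def lact (Δ : A →ₗ[k] A ⊗[k] A) (f : (A →ₗ[k] k)) : A →ₗ[k] A :=
  (TensorProduct.rid k A).toLinearMap ∘ₗ TensorProduct.map LinearMap.id f ∘ₗ Δ

/-- The right action `a·f = Σ ⟨f, a₍₁₎⟩ a₍₂₎` of the dual algebra on `A`. -/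
noncomputable def ract (Δ : A →ₗ[k] A ⊗[k] A) (f : (A →ₗ[k] k)) : A →ₗ[k] A :=
  (TensorProduct.lid k A).toLinearMap ∘ₗ TensorProduct.map f LinearMap.id ∘ₗ Δ

/-- `⟨A, Δ⟩` is a Jordan coalgebra: its dual algebra is commutative and satisfies
the Jordan identity `((ff)g)f = (ff)(gf)`. -/
def IsJordanCoalgebra (Δ : A →ₗ[k] A ⊗[k] A) : Prop :=
  (∀ f g : (A →ₗ[k] k), dmul Δ f g = dmul Δ g f) ∧
  (∀ f g : (A →ₗ[k] k),
    dmul Δ (dmul Δ (dmul Δ f f) g) f = dmul Δ (dmul Δ f f) (dmul Δ g f))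

/-- `B` is a subcoalgebra: `Δ(B) ⊆ B ⊗ B`. -/
def IsSubcoalgebra (Δ : A →ₗ[k] A ⊗[k] A) (B : Submodule k A) : Prop :=
  ∀ b ∈ B, Δ b ∈ LinearMap.range (TensorProduct.map B.subtype B.subtype)

/-- `B` is a coideal: `Δ(B) ⊆ B ⊗ A + A ⊗ B`. -/
def IsCoideal (Δ : A →ₗ[k] A ⊗[k] A) (B : Submodule k A) : Prop :=
  ∀ b ∈ B, Δ b ∈
    LinearMap.range (TensorProduct.map B.subtype (LinearMap.id (R := k) (M := A))) ⊔
    LinearMap.range (TensorProduct.map (LinearMap.id (R := k) (M := A)) B.subtype)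

/-- A derivation of the dual algebra `A*`. -/
def IsDerivation (Δ : A →ₗ[k] A ⊗[k] A)
    (d : (A →ₗ[k] k) →ₗ[k] (A →ₗ[k] k)) : Prop :=
  ∀ f g : (A →ₗ[k] k), d (dmul Δ f g) = dmul Δ (d f) g + dmul Δ f (d g)

theorem dmul_add_left (Δ : A →ₗ[k] A ⊗[k] A) (f₁ f₂ g : (A →ₗ[k] k)) :
    dmul Δ (f₁ + f₂) g = dmul Δ f₁ g + dmul Δ f₂ g := by
  unfold dmul; rw [TensorProduct.map_add_left]; ext a; simp

theorem dmul_add_right (Δ : A →ₗ[k] A ⊗[k] A) (f g₁ g₂ : (A →ₗ[k] k)) :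
    dmul Δ f (g₁ + g₂) = dmul Δ f g₁ + dmul Δ f g₂ := by
  unfold dmul; rw [TensorProduct.map_add_right]; ext a; simp

theorem dmul_smul_left (Δ : A →ₗ[k] A ⊗[k] A) (c : k) (f g : (A →ₗ[k] k)) :
    dmul Δ (c • f) g = c • dmul Δ f g := by
  unfold dmul; rw [TensorProduct.map_smul_left]; ext a; simp

theorem dmul_smul_right (Δ : A →ₗ[k] A ⊗[k] A) (c : k) (f g : (A →ₗ[k] k)) :
    dmul Δ f (c • g) = c • dmul Δ f g := by
  unfold dmul; rw [TensorProduct.map_smul_right]; ext a; simp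

theorem dmul_zero_left (Δ : A →ₗ[k] A ⊗[k] A) (g : (A →ₗ[k] k)) :
    dmul Δ (0 : (A →ₗ[k] k)) g = 0 := by
  ext a; simp [dmul]

theorem dmul_zero_right (Δ : A →ₗ[k] A ⊗[k] A) (f : (A →ₗ[k] k)) :
    dmul Δ f (0 : (A →ₗ[k] k)) = 0 := by
  ext a; simp [dmul]

/-- The operator of right multiplication `f' : g ↦ gf` on the dual algebra. -/
noncomputable def Rop (Δ : A →ₗ[k] A ⊗[k] A) (f : (A →ₗ[k] k)) :
    (A →ₗ[k] k) →ₗ[k] (A →ₗ[k] k) where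
  toFun g := dmul Δ g f
  map_add' g₁ g₂ := dmul_add_left Δ g₁ g₂ f
  map_smul' c g := dmul_smul_left Δ c g f

/-- The inner derivation `[f,g] = f'g' - g'f'` (in right-operator convention,
`x[f,g] = (xf)g - (xg)f`). -/
noncomputable def commD (Δ : A →ₗ[k] A ⊗[k] A) (f g : (A →ₗ[k] k)) :
    (A →ₗ[k] k) →ₗ[k] (A →ₗ[k] k) :=
  Rop Δ g ∘ₗ Rop Δ f - Rop Δ f ∘ₗ Rop Δ g

/-- The space of inner derivations of the dual algebra. -/
noncomputable def IntDer (Δ : A →ₗ[k] A ⊗[k] A) :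
    Submodule k ((A →ₗ[k] k) →ₗ[k] (A →ₗ[k] k)) :=
  Submodule.span k {d | ∃ f g : (A →ₗ[k] k), d = commD Δ f g}

/-- A weakly inner derivation of the dual algebra: a derivation that agrees with some
inner derivation on every finite-dimensional subcoalgebra. -/
def IsWIntDer (Δ : A →ₗ[k] A ⊗[k] A)
    (d : (A →ₗ[k] k) →ₗ[k] (A →ₗ[k] k)) : Prop :=
  IsDerivation Δ d ∧
  ∀ B : Submodule k A, IsSubcoalgebra Δ B → FiniteDimensional k B →
    ∃ i ∈ IntDer Δ, ∀ f : (A →ₗ[k] k), ∀ b ∈ B, d f b = i f b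

/-- The space of weakly inner derivations, as a submodule of `End(A*)`. -/
noncomputable def WIntDer (Δ : A →ₗ[k] A ⊗[k] A) :
    Submodule k ((A →ₗ[k] k) →ₗ[k] (A →ₗ[k] k)) where
  carrier := {d | IsWIntDer Δ d}
  zero_mem' := by
    refine ⟨fun f g => by simp [dmul_zero_left, dmul_zero_right],
      fun B hB hfin => ⟨0, Submodule.zero_mem _, fun f b hb => by simp⟩⟩
  add_mem' := by
    rintro d₁ d₂ ⟨hd₁, hw₁⟩ ⟨hd₂, hw₂⟩
    refine ⟨fun f g => ?_, fun B hB hfin => ?_⟩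
    · simp only [LinearMap.add_apply, hd₁ f g, hd₂ f g, dmul_add_left, dmul_add_right]
      abel
    · obtain ⟨i₁, hi₁, he₁⟩ := hw₁ B hB hfin
      obtain ⟨i₂, hi₂, he₂⟩ := hw₂ B hB hfin
      exact ⟨i₁ + i₂, Submodule.add_mem _ hi₁ hi₂, fun f b hb => by
        simp [LinearMap.add_apply, he₁ f b hb, he₂ f b hb]⟩
  smul_mem' := by
    rintro c d ⟨hd, hw⟩
    refine ⟨fun f g => ?_, fun B hB hfin => ?_⟩
    · simp only [LinearMap.smul_apply, hd f g, dmul_smul_left, dmul_smul_right, smul_add]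
    · obtain ⟨i, hi, he⟩ := hw B hB hfin
      exact ⟨c • i, Submodule.smul_mem _ c hi, fun f b hb => by
        simp [LinearMap.smul_apply, he f b hb]⟩
/-- Multiplication in the null extension `C = A* ⊕ A`. -/
noncomputable def cmul (Δ : A →ₗ[k] A ⊗[k] A) (x y : (A →ₗ[k] k) × A) :
    (A →ₗ[k] k) × A :=
  (dmul Δ x.1 y.1, lact Δ x.1 y.2 + lact Δ y.1 x.2)

theorem lact_add_left (Δ : A →ₗ[k] A ⊗[k] A) (f₁ f₂ : (A →ₗ[k] k)) (a : A) :
    lact Δ (f₁ + f₂) a = lact Δ f₁ a + lact Δ f₂ a := by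
  simp [lact, TensorProduct.map_add_right]

theorem lact_smul_left (Δ : A →ₗ[k] A ⊗[k] A) (c : k) (f : (A →ₗ[k] k)) (a : A) :
    lact Δ (c • f) a = c • lact Δ f a := by
  simp [lact, TensorProduct.map_smul_right]

/-- Right multiplication by an element of the null extension `C = A* ⊕ A`,
as a linear operator on `C`. -/
noncomputable def RopC (Δ : A →ₗ[k] A ⊗[k] A) (x : (A →ₗ[k] k) × A) :
    ((A →ₗ[k] k) × A) →ₗ[k] ((A →ₗ[k] k) × A) where
  toFun y := cmul Δ y x
  map_add' y z := by
    simp only [cmul, Prod.fst_add, Prod.snd_add, Prod.mk_add_mk, dmul_add_left,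
      lact_add_left, map_add]
    rw [Prod.mk.injEq]
    constructor
    · rfl
    · abel
  map_smul' c y := by
    simp only [cmul, Prod.smul_fst, Prod.smul_snd, Prod.smul_mk, dmul_smul_left,
      lact_smul_left, map_smul, RingHom.id_apply, smul_add]

/-- The operator `[x,y] = x'y' - y'x'` on the null extension `C`
(right-operator convention: `z[x,y] = (zx)y - (zy)x`). -/
noncomputable def commC (Δ : A →ₗ[k] A ⊗[k] A) (x y : (A →ₗ[k] k) × A) :
    ((A →ₗ[k] k) × A) →ₗ[k] ((A →ₗ[k] k) × A) :=
  RopC Δ y ∘ₗ RopC Δ x - RopC Δ x ∘ₗ RopC Δ y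

/-- The mixed commutator operator `[f,a]` on `C`, for `f ∈ A*` and `a ∈ A`. -/
noncomputable def commMixed (Δ : A →ₗ[k] A ⊗[k] A) (f : (A →ₗ[k] k)) (a : A) :
    ((A →ₗ[k] k) × A) →ₗ[k] ((A →ₗ[k] k) × A) :=
  commC Δ (f, 0) (0, a)

/-- The space `[A*, A]`, spanned by the mixed commutators, inside `End(C)`. -/
noncomputable def CommAA (Δ : A →ₗ[k] A ⊗[k] A) :
    Submodule k (((A →ₗ[k] k) × A) →ₗ[k] ((A →ₗ[k] k) × A)) :=
  Submodule.span k {u | ∃ (f : (A →ₗ[k] k)) (a : A), u = commMixed Δ f a}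

/-- The Kantor–Koecher–Tits bracket on `L(A*) = A* ⊕ (A*)' ⊕ WIntDer(A*) ⊕ Ā*`
(the third component is taken in `End(A*)`; for elements of `L(A*)` it lies in
`WIntDer(A*)`).  An element `(a, g, d, b)` represents `a + g' + d + b̄`. -/
noncomputable def bracketStar (Δ : A →ₗ[k] A ⊗[k] A)
    (l₁ l₂ : (A →ₗ[k] k) × (A →ₗ[k] k) × ((A →ₗ[k] k) →ₗ[k] (A →ₗ[k] k)) × (A →ₗ[k] k)) :
    (A →ₗ[k] k) × (A →ₗ[k] k) × ((A →ₗ[k] k) →ₗ[k] (A →ₗ[k] k)) × (A →ₗ[k] k) :=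
  (dmul Δ l₁.1 l₂.2.1 + l₂.2.2.1 l₁.1 - dmul Δ l₂.1 l₁.2.1 - l₁.2.2.1 l₂.1,
   dmul Δ l₁.1 l₂.2.2.2 - dmul Δ l₂.1 l₁.2.2.2 + l₂.2.2.1 l₁.2.1 - l₁.2.2.1 l₂.2.1,
   - commD Δ l₁.1 l₂.2.2.2 + commD Δ l₂.1 l₁.2.2.2 + commD Δ l₁.2.1 l₂.2.1
     + (l₂.2.2.1 ∘ₗ l₁.2.2.1 - l₁.2.2.1 ∘ₗ l₂.2.2.1),
   - dmul Δ l₁.2.2.2 l₂.2.1 + l₂.2.2.1 l₁.2.2.2 + dmul Δ l₂.2.2.2 l₁.2.1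
     - l₁.2.2.1 l₂.2.2.2)

/-- The involution `ε(a + c' + d + b̄) = b - c' + d + ā` on `L(A*)`. -/
def epsStar
    (l : (A →ₗ[k] k) × (A →ₗ[k] k) × ((A →ₗ[k] k) →ₗ[k] (A →ₗ[k] k)) × (A →ₗ[k] k)) :
    (A →ₗ[k] k) × (A →ₗ[k] k) × ((A →ₗ[k] k) →ₗ[k] (A →ₗ[k] k)) × (A →ₗ[k] k) :=
  (l.2.2.2, - l.2.1, l.2.2.1, l.1)

/-- The module action `[l, l*]` of `L(A*)` on `L(A) = A ⊕ A' ⊕ [A*,A] ⊕ Ā`.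
`Dex d` is the canonical extension of a weakly inner derivation `d` to `A`
(Proposition 2), passed as a parameter.  An element `(a, b, v, c)` of `L(A)`
represents `a + b' + v + c̄`. -/
noncomputable def actLL (Δ : A →ₗ[k] A ⊗[k] A)
    (Dex : ((A →ₗ[k] k) →ₗ[k] (A →ₗ[k] k)) → (A →ₗ[k] A))
    (l : A × A × (((A →ₗ[k] k) × A) →ₗ[k] ((A →ₗ[k] k) × A)) × A)
    (ls : (A →ₗ[k] k) × (A →ₗ[k] k) × ((A →ₗ[k] k) →ₗ[k] (A →ₗ[k] k)) × (A →ₗ[k] k)) :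
    A × A × (((A →ₗ[k] k) × A) →ₗ[k] ((A →ₗ[k] k) × A)) × A :=
  (lact Δ ls.2.1 l.1 + Dex ls.2.2.1 l.1 - lact Δ ls.1 l.2.1 - (l.2.2.1 (ls.1, 0)).2,
   ract Δ ls.2.2.2 l.1 - lact Δ ls.1 l.2.2.2 + Dex ls.2.2.1 l.2.1,
   commMixed Δ ls.2.2.2 l.1 + commMixed Δ ls.1 l.2.2.2 - commMixed Δ ls.2.1 l.2.1
     + (RopC Δ (ls.2.1, 0) ∘ₗ l.2.2.1 - l.2.2.1 ∘ₗ RopC Δ (ls.2.1, 0))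
     + ((LinearMap.prodMap ls.2.2.1 (Dex ls.2.2.1)) ∘ₗ l.2.2.1
        - l.2.2.1 ∘ₗ (LinearMap.prodMap ls.2.2.1 (Dex ls.2.2.1))),
   - lact Δ ls.2.1 l.2.2.2 + Dex ls.2.2.1 l.2.2.2 + lact Δ ls.2.2.2 l.2.1
     - (l.2.2.1 (ls.2.2.2, 0)).2)

/-- The natural pairing between `L(A*)` and `L(A)`, via the identification
`WIntDer(A*) ≅ ([A*,A])*` given by `φ` (Lemma 2). -/
noncomputable def pairSF (Δ : A →ₗ[k] A ⊗[k] A)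
    (φ : ↥(WIntDer Δ) →ₗ[k] (↥(CommAA Δ) →ₗ[k] k))
    (ls : (A →ₗ[k] k) × (A →ₗ[k] k) × ((A →ₗ[k] k) →ₗ[k] (A →ₗ[k] k)) × (A →ₗ[k] k))
    (l : A × A × (((A →ₗ[k] k) × A) →ₗ[k] ((A →ₗ[k] k) × A)) × A)
    (hd : ls.2.2.1 ∈ WIntDer Δ) (hv : l.2.2.1 ∈ CommAA Δ) : k :=
  ls.1 l.1 + ls.2.1 l.2.1 + φ ⟨ls.2.2.1, hd⟩ ⟨l.2.2.1, hv⟩ + ls.2.2.2 l.2.2.2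

/-- The space `L(A) = A ⊕ A' ⊕ [A*,A] ⊕ Ā` underlying the Lie coalgebra of Theorem 1.
An element `(a, b, v, c)` represents `a + b' + v + c̄`. -/
@[reducible] def LKKT (Δ : A →ₗ[k] A ⊗[k] A) : Type _ :=
  A × A × ↥(CommAA Δ) × A

/-- An element of `L(A*) = A* ⊕ (A*)' ⊕ WIntDer(A*) ⊕ Ā*` as a linear functional on
`L(A)`, via the identification `WIntDer(A*) ≅ ([A*,A])*` given by `φ` (Lemma 2). -/
noncomputable def toFunc (Δ : A →ₗ[k] A ⊗[k] A)
    (φ : ↥(WIntDer Δ) →ₗ[k] (↥(CommAA Δ) →ₗ[k] k))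
    (f : (A →ₗ[k] k) × (A →ₗ[k] k) × ((A →ₗ[k] k) →ₗ[k] (A →ₗ[k] k)) × (A →ₗ[k] k))
    (hf : f.2.2.1 ∈ WIntDer Δ) : LKKT Δ →ₗ[k] k :=
  f.1 ∘ₗ LinearMap.fst k A (A × (↥(CommAA Δ) × A)) +
  f.2.1 ∘ₗ (LinearMap.fst k A (↥(CommAA Δ) × A)
      ∘ₗ LinearMap.snd k A (A × (↥(CommAA Δ) × A))) +
  (φ ⟨f.2.2.1, hf⟩) ∘ₗ (LinearMap.fst k ↥(CommAA Δ) A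
      ∘ₗ LinearMap.snd k A (↥(CommAA Δ) × A)
      ∘ₗ LinearMap.snd k A (A × (↥(CommAA Δ) × A))) +
  f.2.2.2 ∘ₗ (LinearMap.snd k ↥(CommAA Δ) A
      ∘ₗ LinearMap.snd k A (↥(CommAA Δ) × A)
      ∘ₗ LinearMap.snd k A (A × (↥(CommAA Δ) × A)))

/-- The standard embedding `ρ` on a pair of functionals: `ρ(F ⊗ G)` as a functional
on `M ⊗ M`. -/
noncomputable def pairT {M : Type*} [AddCommGroup M] [Module k M]
    (F G : M →ₗ[k] k) : (M ⊗[k] M) →ₗ[k] k :=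
  (TensorProduct.lid k k).toLinearMap ∘ₗ TensorProduct.map F G

/-- The map `π(a + b' + v + c̄) = c - b' + v + ā` on `L(A)`. -/
def piL (Δ : A →ₗ[k] A ⊗[k] A) (l : LKKT Δ) : LKKT Δ :=
  (l.2.2.2, - l.2.1, l.2.2.1, l.1)

/-- The natural inclusion `A → L(A)`. -/
noncomputable def inclA (Δ : A →ₗ[k] A ⊗[k] A) : A →ₗ[k] LKKT Δ :=
  LinearMap.prod LinearMap.id (LinearMap.prod 0 (LinearMap.prod 0 0))

/-- The subspace `p*(B) = {v ∈ [A*,A] | A* · v ⊆ B}` of `[A*,A]`. -/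
noncomputable def pstarSub (Δ : A →ₗ[k] A ⊗[k] A) (B : Submodule k A) :
    Submodule k ↥(CommAA Δ) where
  carrier := {w | ∀ f : A →ₗ[k] k,
    (((w : ((A →ₗ[k] k) × A) →ₗ[k] ((A →ₗ[k] k) × A))) (f, 0)).2 ∈ B}
  zero_mem' := by intro f; simp
  add_mem' := by
    intro w₁ w₂ h₁ h₂ f
    simp only [Submodule.coe_add, LinearMap.add_apply, Prod.snd_add]
    exact B.add_mem (h₁ f) (h₂ f)
  smul_mem' := by
    intro c w h f
    simp only [SetLike.val_smul, LinearMap.smul_apply, Prod.smul_snd]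
    exact B.smul_mem c (h f)

/-- The subcoalgebra `I₁*(B) = B ⊕ B' ⊕ [A*, B] ⊕ B̄` of `⟨L(A), Δ_L⟩`. -/
noncomputable def I1star (Δ : A →ₗ[k] A ⊗[k] A) (B : Submodule k A) :
    Submodule k (LKKT Δ) :=
  B.prod (B.prod ((Submodule.comap (CommAA Δ).subtype
    (Submodule.span k {u | ∃ (f : A →ₗ[k] k), ∃ b ∈ B, u = commMixed Δ f b})).prod B))

/-- The subcoalgebra `I₂*(B) = B ⊕ B' ⊕ p*(B) ⊕ B̄` of `⟨L(A), Δ_L⟩`. -/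
noncomputable def I2star (Δ : A →ₗ[k] A ⊗[k] A) (B : Submodule k A) :
    Submodule k (LKKT Δ) :=
  B.prod (B.prod ((pstarSub Δ B).prod B))

noncomputable instance CommAA.instAddCommGroup (Δ : A →ₗ[k] A ⊗[k] A) :
    AddCommGroup ↥(CommAA Δ) :=
  @Submodule.addCommGroup k (((A →ₗ[k] k) × A) →ₗ[k] ((A →ₗ[k] k) × A)) _ _ _ (CommAA Δ)

set_option maxHeartbeats 2000000
set_option synthInstance.maxHeartbeats 400000

noncomputable instance dualK.instAddCommGroup : AddCommGroup (A →ₗ[k] k) :=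
  LinearMap.addCommGroup

noncomputable instance dualEnd.instAddCommGroup :
    AddCommGroup ((A →ₗ[k] k) →ₗ[k] (A →ₗ[k] k)) :=
  LinearMap.addCommGroup

noncomputable instance WIntDer.instAddCommGroup (Δ : A →ₗ[k] A ⊗[k] A) :
    AddCommGroup ↥(WIntDer Δ) :=
  @Submodule.addCommGroup k ((A →ₗ[k] k) →ₗ[k] (A →ₗ[k] k)) _ _ _ (WIntDer Δ)

section AuxJ
variable {k : Type*} [Field k] {A : Type*} [AddCommGroup A] [Module k A]

theorem dmul_neg_left (Δ : A →ₗ[k] A ⊗[k] A) (f g : A →ₗ[k] k) :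
    dmul Δ (-f) g = - dmul Δ f g := by
  rw [← neg_one_smul k f, dmul_smul_left, neg_one_smul]

theorem dmul_neg_right (Δ : A →ₗ[k] A ⊗[k] A) (f g : A →ₗ[k] k) :
    dmul Δ f (-g) = - dmul Δ f g := by
  rw [← neg_one_smul k g, dmul_smul_right, neg_one_smul]

theorem dmul_sub_left (Δ : A →ₗ[k] A ⊗[k] A) (f₁ f₂ g : A →ₗ[k] k) :
    dmul Δ (f₁ - f₂) g = dmul Δ f₁ g - dmul Δ f₂ g := by
  rw [sub_eq_add_neg, dmul_add_left, dmul_neg_left, sub_eq_add_neg]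

theorem dmul_sub_right (Δ : A →ₗ[k] A ⊗[k] A) (f g₁ g₂ : A →ₗ[k] k) :
    dmul Δ f (g₁ - g₂) = dmul Δ f g₁ - dmul Δ f g₂ := by
  rw [sub_eq_add_neg, dmul_add_right, dmul_neg_right, sub_eq_add_neg]

theorem Rop_apply (Δ : A →ₗ[k] A ⊗[k] A) (f g : A →ₗ[k] k) :
    Rop Δ f g = dmul Δ g f := rfl

theorem lin1 (h2 : (2:k) ≠ 0) (Δ : A →ₗ[k] A ⊗[k] A) (hJ : IsJordanCoalgebra Δ)
    (f h g : A →ₗ[k] k) :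
    dmul Δ (dmul Δ (dmul Δ f f) g) h + dmul Δ (dmul Δ (dmul Δ f h) g) f
      + dmul Δ (dmul Δ (dmul Δ h f) g) f
    = dmul Δ (dmul Δ f f) (dmul Δ g h) + dmul Δ (dmul Δ f h) (dmul Δ g f)
      + dmul Δ (dmul Δ h f) (dmul Δ g f) := by
  have e1 := hJ.2 (f + h) g
  have e2 := hJ.2 (f - h) g
  have e3 := hJ.2 h g
  simp only [dmul_add_left, dmul_add_right, dmul_sub_left, dmul_sub_right] at e1 e2
  apply smul_right_injective (A →ₗ[k] k) h2
  show (2:k) • _ = (2:k) • _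
  linear_combination (norm := module) e1 - e2 - (2:k) • e3

theorem lin2 (h2 : (2:k) ≠ 0) (Δ : A →ₗ[k] A ⊗[k] A) (hJ : IsJordanCoalgebra Δ)
    (u w h g : A →ₗ[k] k) :
    dmul Δ (dmul Δ (dmul Δ u w) g) h + dmul Δ (dmul Δ (dmul Δ w u) g) h
      + dmul Δ (dmul Δ (dmul Δ u h) g) w + dmul Δ (dmul Δ (dmul Δ h u) g) w
      + dmul Δ (dmul Δ (dmul Δ w h) g) u + dmul Δ (dmul Δ (dmul Δ h w) g) u
    = dmul Δ (dmul Δ u w) (dmul Δ g h) + dmul Δ (dmul Δ w u) (dmul Δ g h)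
      + dmul Δ (dmul Δ u h) (dmul Δ g w) + dmul Δ (dmul Δ h u) (dmul Δ g w)
      + dmul Δ (dmul Δ w h) (dmul Δ g u) + dmul Δ (dmul Δ h w) (dmul Δ g u) := by
  have a := lin1 h2 Δ hJ (u + w) h g
  simp only [dmul_add_left, dmul_add_right] at a
  linear_combination (norm := module) a - lin1 h2 Δ hJ u h g - lin1 h2 Δ hJ w h g

theorem commD_isDerivation (h2 : (2:k) ≠ 0) (Δ : A →ₗ[k] A ⊗[k] A)
    (hJ : IsJordanCoalgebra Δ) (p q : A →ₗ[k] k) :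
    IsDerivation Δ (commD Δ p q) := by
  intro f g
  have e1 := lin2 h2 Δ hJ f g q p
  have e2 := lin2 h2 Δ hJ f g p q
  simp only [commD, LinearMap.sub_apply, LinearMap.comp_apply, Rop_apply,
    dmul_sub_left, dmul_sub_right]
  rw [hJ.1 g f, hJ.1 q f, hJ.1 q g, hJ.1 p f, hJ.1 p g] at e1 e2
  rw [hJ.1 q p] at e2
  rw [hJ.1 (dmul Δ g q) (dmul Δ f p)] at e1
  rw [hJ.1 (dmul Δ g p) (dmul Δ f q)] at e2
  rw [hJ.1 f (dmul Δ (dmul Δ g p) q), hJ.1 f (dmul Δ (dmul Δ g q) p)]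
  apply smul_right_injective (A →ₗ[k] k) h2
  show (2:k) • _ = (2:k) • _
  linear_combination (norm := module) e1 - e2

end AuxJ
section AuxT
variable {k : Type*} [Field k] {A : Type*} [AddCommGroup A] [Module k A]

theorem pairT_comp {M N : Type*} [AddCommGroup M] [Module k M] [AddCommGroup N] [Module k N]
    (F G : M →ₗ[k] k) (s r : N →ₗ[k] M) (t : N ⊗[k] N) :
    pairT F G (TensorProduct.map s r t) = pairT (F ∘ₗ s) (G ∘ₗ r) t := by
  have : (pairT F G) ∘ₗ (TensorProduct.map s r) = pairT (F ∘ₗ s) (G ∘ₗ r) := by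
    apply TensorProduct.ext'
    intro x y
    simp [pairT]
  exact DFunLike.congr_fun this t

theorem tensor_eq_zero_of_pairT {M : Type*} [AddCommGroup M] [Module k M]
    (t : M ⊗[k] M) (h : ∀ F G : M →ₗ[k] k, pairT F G t = 0) : t = 0 := by
  let b := Module.Basis.ofVectorSpace k M
  let bT := Module.Basis.tensorProduct b b
  apply bT.repr.injective
  rw [map_zero]
  ext ij
  obtain ⟨i, j⟩ := ij
  have key : (Finsupp.lapply (i, j)) ∘ₗ (bT.repr : M ⊗[k] M →ₗ[k] _)
      = pairT (b.coord i) (b.coord j) := by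
    apply TensorProduct.ext'
    intro x y
    simp [bT, Module.Basis.tensorProduct_repr_tmul_apply, pairT, mul_comm, Module.Basis.coord_apply]
  have := DFunLike.congr_fun key t
  simp only [LinearMap.comp_apply, Finsupp.lapply_apply, LinearEquiv.coe_coe] at this
  rw [this, h]
  simp

theorem mem_range_map_subtype {B : Submodule k A} (t : A ⊗[k] A)
    (hL : ∀ (q h : A →ₗ[k] k), (∀ x ∈ B, q x = 0) → pairT q h t = 0)
    (hR : ∀ (q h : A →ₗ[k] k), (∀ x ∈ B, q x = 0) → pairT h q t = 0) :
    t ∈ LinearMap.range (TensorProduct.map B.subtype B.subtype) := by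
  obtain ⟨C, hC⟩ := Submodule.exists_isCompl B
  set prB := B.linearProjOfIsCompl C hC with hprB
  set sp : A →ₗ[k] A := B.subtype ∘ₗ prB with hsp
  set sc : A →ₗ[k] A := LinearMap.id - sp with hscdef
  have hsc : ∀ x ∈ B, sc x = 0 := by
    intro x hx
    have : prB x = ⟨x, hx⟩ := Submodule.linearProjOfIsCompl_apply_left hC ⟨x, hx⟩
    simp [hscdef, hsp, LinearMap.sub_apply, LinearMap.comp_apply, this]
  have hz1 : TensorProduct.map sc LinearMap.id t = 0 := by
    apply tensor_eq_zero_of_pairT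
    intro F G
    rw [pairT_comp]
    exact hL (F ∘ₗ sc) (G ∘ₗ LinearMap.id)
      (fun x hx => by simp [LinearMap.comp_apply, hsc x hx])
  have hz2 : TensorProduct.map LinearMap.id sc t = 0 := by
    apply tensor_eq_zero_of_pairT
    intro F G
    rw [pairT_comp]
    exact hR (G ∘ₗ sc) (F ∘ₗ LinearMap.id)
      (fun x hx => by simp [LinearMap.comp_apply, hsc x hx])
  have hfact : ∀ (u v : A →ₗ[k] A), TensorProduct.map u v
      = (TensorProduct.map u LinearMap.id) ∘ₗ (TensorProduct.map LinearMap.id v) := by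
    intro u v
    rw [← TensorProduct.map_comp, LinearMap.comp_id, LinearMap.id_comp]
  have hfact2 : ∀ (u v : A →ₗ[k] A), TensorProduct.map u v
      = (TensorProduct.map LinearMap.id v) ∘ₗ (TensorProduct.map u LinearMap.id) := by
    intro u v
    rw [← TensorProduct.map_comp, LinearMap.comp_id, LinearMap.id_comp]
  have c1 : TensorProduct.map sp sc t = 0 := by
    rw [hfact, LinearMap.comp_apply, hz2, map_zero]
  have c2 : TensorProduct.map sc sp t = 0 := by
    rw [hfact2, LinearMap.comp_apply, hz1, map_zero]
  have c3 : TensorProduct.map sc sc t = 0 := by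
    rw [hfact2, LinearMap.comp_apply, hz1, map_zero]
  have h0 : TensorProduct.map sp sp t + TensorProduct.map sp sc t
      + (TensorProduct.map sc sp t + TensorProduct.map sc sc t) = t := by
    have hid : sp + sc = LinearMap.id := by rw [hscdef]; abel
    have h0' : TensorProduct.map (sp + sc) (sp + sc) t = t := by
      rw [hid, TensorProduct.map_id, LinearMap.id_apply]
    rw [TensorProduct.map_add_left, TensorProduct.map_add_right,
      TensorProduct.map_add_right, LinearMap.add_apply, LinearMap.add_apply,
      LinearMap.add_apply] at h0'
    exact h0'
  rw [c1, c2, c3] at h0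
  have ht : t = TensorProduct.map sp sp t := by
    conv_lhs => rw [← h0]
    simp
  rw [ht, hsp]
  have : TensorProduct.map (B.subtype ∘ₗ prB) (B.subtype ∘ₗ prB)
      = (TensorProduct.map B.subtype B.subtype) ∘ₗ (TensorProduct.map prB prB) :=
    TensorProduct.map_comp _ _ _ _
  rw [this]
  exact ⟨TensorProduct.map prB prB t, rfl⟩

theorem mem_of_forall_dual {M : Type*} [AddCommGroup M] [Module k M]
    (W : Submodule k M) (x : M)
    (h : ∀ ζ : M →ₗ[k] k, (∀ y ∈ W, ζ y = 0) → ζ x = 0) : x ∈ W := by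
  by_contra hx
  have hne : W.mkQ x ≠ 0 := by
    rw [Submodule.mkQ_apply, ne_eq, Submodule.Quotient.mk_eq_zero]
    exact hx
  obtain ⟨ψ, hψ⟩ : ∃ ψ : (M ⧸ W) →ₗ[k] k, ψ (W.mkQ x) ≠ 0 := by
    by_contra hall
    push_neg at hall
    exact hne ((Module.forall_dual_apply_eq_zero_iff k _).mp hall)
  exact hψ (h (ψ ∘ₗ W.mkQ) (fun y hy => by
    simp [LinearMap.comp_apply, Submodule.mkQ_apply,
      (Submodule.Quotient.mk_eq_zero _).mpr hy]))

end AuxT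
section AuxL
variable {k : Type*} [Field k] {A : Type*} [AddCommGroup A] [Module k A]

theorem Rop_zero (Δ : A →ₗ[k] A ⊗[k] A) : Rop Δ (0 : A →ₗ[k] k) = 0 := by
  ext g a
  show dmul Δ g 0 a = 0
  rw [dmul_zero_right]
  rfl

theorem commD_zero_left (Δ : A →ₗ[k] A ⊗[k] A) (h : A →ₗ[k] k) :
    commD Δ 0 h = 0 := by
  unfold commD
  rw [Rop_zero]
  simp

theorem commD_zero_right (Δ : A →ₗ[k] A ⊗[k] A) (h : A →ₗ[k] k) :
    commD Δ h 0 = 0 := by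
  unfold commD
  rw [Rop_zero]
  simp

theorem Rop_one (Δ : A →ₗ[k] A ⊗[k] A) (one : A →ₗ[k] k)
    (hone2 : ∀ f, dmul Δ f one = f) : Rop Δ one = LinearMap.id := by
  ext g a
  show dmul Δ g one a = g a
  rw [hone2]

theorem commD_one_left (Δ : A →ₗ[k] A ⊗[k] A) (one : A →ₗ[k] k)
    (hone2 : ∀ f, dmul Δ f one = f) (h : A →ₗ[k] k) : commD Δ one h = 0 := by
  unfold commD
  rw [Rop_one Δ one hone2]
  simp

theorem commD_one_right (Δ : A →ₗ[k] A ⊗[k] A) (one : A →ₗ[k] k)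
    (hone2 : ∀ f, dmul Δ f one = f) (h : A →ₗ[k] k) : commD Δ h one = 0 := by
  unfold commD
  rw [Rop_one Δ one hone2]
  simp

theorem apply_lact (Δ : A →ₗ[k] A ⊗[k] A) (q u : A →ₗ[k] k) (a : A) :
    q (lact Δ u a) = dmul Δ q u a := by
  have key : q ∘ₗ ((TensorProduct.rid k A).toLinearMap ∘ₗ TensorProduct.map LinearMap.id u)
      = (TensorProduct.lid k k).toLinearMap ∘ₗ TensorProduct.map q u := by
    apply TensorProduct.ext'
    intro x y
    simp [mul_comm, smul_eq_mul]
  have := DFunLike.congr_fun key (Δ a)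
  simpa [lact, dmul, LinearMap.comp_apply] using this

theorem apply_ract (Δ : A →ₗ[k] A ⊗[k] A) (q u : A →ₗ[k] k) (a : A) :
    q (ract Δ u a) = dmul Δ u q a := by
  have key : q ∘ₗ ((TensorProduct.lid k A).toLinearMap ∘ₗ TensorProduct.map u LinearMap.id)
      = (TensorProduct.lid k k).toLinearMap ∘ₗ TensorProduct.map u q := by
    apply TensorProduct.ext'
    intro x y
    simp [mul_comm, smul_eq_mul]
  have := DFunLike.congr_fun key (Δ a)
  simpa [ract, dmul, LinearMap.comp_apply] using this

theorem toFunc_apply (Δ : A →ₗ[k] A ⊗[k] A)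
    (φ : ↥(WIntDer Δ) →ₗ[k] (↥(CommAA Δ) →ₗ[k] k))
    (f : (A →ₗ[k] k) × (A →ₗ[k] k) × ((A →ₗ[k] k) →ₗ[k] (A →ₗ[k] k)) × (A →ₗ[k] k))
    (hf : f.2.2.1 ∈ WIntDer Δ) (l : LKKT Δ) :
    toFunc Δ φ f hf l = f.1 l.1 + f.2.1 l.2.1 + φ ⟨f.2.2.1, hf⟩ l.2.2.1
      + f.2.2.2 l.2.2.2 := by
  simp [toFunc]

theorem pairT_zero_left {M : Type*} [AddCommGroup M] [Module k M]
    (G : M →ₗ[k] k) (t : M ⊗[k] M) : pairT (0 : M →ₗ[k] k) G t = 0 := by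
  simp [pairT, TensorProduct.map_zero_left]

theorem pairT_zero_right {M : Type*} [AddCommGroup M] [Module k M]
    (F : M →ₗ[k] k) (t : M ⊗[k] M) : pairT F (0 : M →ₗ[k] k) t = 0 := by
  simp [pairT, TensorProduct.map_zero_right]

/-- The `Kil` predicate: the quadruple `(f₁,f₂,d,f₄)` annihilates `I`. -/
def Kil (Δ : A →ₗ[k] A ⊗[k] A) (φ : ↥(WIntDer Δ) →ₗ[k] (↥(CommAA Δ) →ₗ[k] k))
    (I : Submodule k (LKKT Δ)) (f₁ f₂ : A →ₗ[k] k) (d : ↥(WIntDer Δ))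
    (f₄ : A →ₗ[k] k) : Prop :=
  ∀ l ∈ I, f₁ l.1 + f₂ l.2.1 + φ d l.2.2.1 + f₄ l.2.2.2 = 0

theorem kil_toFunc (Δ : A →ₗ[k] A ⊗[k] A)
    (φ : ↥(WIntDer Δ) →ₗ[k] (↥(CommAA Δ) →ₗ[k] k)) (I : Submodule k (LKKT Δ))
    (f₁ f₂ : A →ₗ[k] k) (d : ↥(WIntDer Δ)) (f₄ : A →ₗ[k] k) :
    Kil Δ φ I f₁ f₂ d f₄ ↔
      (∀ l ∈ I, toFunc Δ φ (f₁, f₂, (d : (A →ₗ[k] k) →ₗ[k] (A →ₗ[k] k)), f₄) d.2 l = 0) := by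
  constructor <;> intro h l hl <;> have := h l hl <;>
    [rw [toFunc_apply]; rw [toFunc_apply] at this] <;> simpa using this

theorem kil_add (Δ : A →ₗ[k] A ⊗[k] A) (φ : ↥(WIntDer Δ) →ₗ[k] (↥(CommAA Δ) →ₗ[k] k))
    (I : Submodule k (LKKT Δ)) {f₁ f₂ g₁ g₂ : A →ₗ[k] k} {d e : ↥(WIntDer Δ)}
    {f₄ g₄ : A →ₗ[k] k} (h1 : Kil Δ φ I f₁ f₂ d f₄) (h2 : Kil Δ φ I g₁ g₂ e g₄) :
    Kil Δ φ I (f₁ + g₁) (f₂ + g₂) (d + e) (f₄ + g₄) := by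
  intro l hl
  have a1 := h1 l hl
  have a2 := h2 l hl
  simp only [LinearMap.add_apply, map_add]
  linear_combination a1 + a2

theorem kil_smul (Δ : A →ₗ[k] A ⊗[k] A) (φ : ↥(WIntDer Δ) →ₗ[k] (↥(CommAA Δ) →ₗ[k] k))
    (I : Submodule k (LKKT Δ)) {f₁ f₂ : A →ₗ[k] k} {d : ↥(WIntDer Δ)}
    {f₄ : A →ₗ[k] k} (c : k) (h1 : Kil Δ φ I f₁ f₂ d f₄) :
    Kil Δ φ I (c • f₁) (c • f₂) (c • d) (c • f₄) := by
  intro l hl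
  have a1 := h1 l hl
  simp only [LinearMap.smul_apply, map_smul, smul_eq_mul]
  linear_combination c * a1

theorem kil_sub (Δ : A →ₗ[k] A ⊗[k] A) (φ : ↥(WIntDer Δ) →ₗ[k] (↥(CommAA Δ) →ₗ[k] k))
    (I : Submodule k (LKKT Δ)) {f₁ f₂ g₁ g₂ : A →ₗ[k] k} {d e : ↥(WIntDer Δ)}
    {f₄ g₄ : A →ₗ[k] k} (h1 : Kil Δ φ I f₁ f₂ d f₄) (h2 : Kil Δ φ I g₁ g₂ e g₄) :
    Kil Δ φ I (f₁ - g₁) (f₂ - g₂) (d - e) (f₄ - g₄) := by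
  intro l hl
  have a1 := h1 l hl
  have a2 := h2 l hl
  have hφ : φ (d - e) = φ d - φ e := map_sub φ d e
  simp only [LinearMap.sub_apply, hφ]
  linear_combination a1 - a2

theorem kil_bracket_left (Δ : A →ₗ[k] A ⊗[k] A)
    (φ : ↥(WIntDer Δ) →ₗ[k] (↥(CommAA Δ) →ₗ[k] k))
    (ΔL : LKKT Δ →ₗ[k] (LKKT Δ ⊗[k] LKKT Δ))
    (hΔL : ∀ (f g : (A →ₗ[k] k) × (A →ₗ[k] k) ×
          ((A →ₗ[k] k) →ₗ[k] (A →ₗ[k] k)) × (A →ₗ[k] k))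
      (hf : f.2.2.1 ∈ WIntDer Δ) (hg : g.2.2.1 ∈ WIntDer Δ)
      (hbr : (bracketStar Δ f g).2.2.1 ∈ WIntDer Δ) (l : LKKT Δ),
      toFunc Δ φ (bracketStar Δ f g) hbr l
        = pairT (M := LKKT Δ) (toFunc Δ φ f hf) (toFunc Δ φ g hg) (ΔL l))
    (I : Submodule k (LKKT Δ)) (hI : IsSubcoalgebra (A := LKKT Δ) ΔL I)
    (ξ g : (A →ₗ[k] k) × (A →ₗ[k] k) × ((A →ₗ[k] k) →ₗ[k] (A →ₗ[k] k)) × (A →ₗ[k] k))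
    (hξ : ξ.2.2.1 ∈ WIntDer Δ) (hg : g.2.2.1 ∈ WIntDer Δ)
    (hbr : (bracketStar Δ ξ g).2.2.1 ∈ WIntDer Δ)
    (hk : ∀ l ∈ I, toFunc Δ φ ξ hξ l = 0) :
    ∀ l ∈ I, toFunc Δ φ (bracketStar Δ ξ g) hbr l = 0 := by
  intro l hl
  rw [hΔL ξ g hξ hg hbr l]
  obtain ⟨s, hs⟩ := hI l hl
  rw [← hs]
  clear hs
  have hz : ∀ y : ↥I, toFunc Δ φ ξ hξ (y : LKKT Δ) = 0 := fun y => hk y.1 y.2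
  induction s using TensorProduct.induction_on with
  | zero => simp
  | tmul x y => simp [pairT, TensorProduct.map_tmul, hz]
  | add u v hu hv => rw [map_add, map_add, hu, hv, add_zero]

theorem kil_bracket_right (Δ : A →ₗ[k] A ⊗[k] A)
    (φ : ↥(WIntDer Δ) →ₗ[k] (↥(CommAA Δ) →ₗ[k] k))
    (ΔL : LKKT Δ →ₗ[k] (LKKT Δ ⊗[k] LKKT Δ))
    (hΔL : ∀ (f g : (A →ₗ[k] k) × (A →ₗ[k] k) ×
          ((A →ₗ[k] k) →ₗ[k] (A →ₗ[k] k)) × (A →ₗ[k] k))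
      (hf : f.2.2.1 ∈ WIntDer Δ) (hg : g.2.2.1 ∈ WIntDer Δ)
      (hbr : (bracketStar Δ f g).2.2.1 ∈ WIntDer Δ) (l : LKKT Δ),
      toFunc Δ φ (bracketStar Δ f g) hbr l
        = pairT (M := LKKT Δ) (toFunc Δ φ f hf) (toFunc Δ φ g hg) (ΔL l))
    (I : Submodule k (LKKT Δ)) (hI : IsSubcoalgebra (A := LKKT Δ) ΔL I)
    (ξ g : (A →ₗ[k] k) × (A →ₗ[k] k) × ((A →ₗ[k] k) →ₗ[k] (A →ₗ[k] k)) × (A →ₗ[k] k))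
    (hξ : ξ.2.2.1 ∈ WIntDer Δ) (hg : g.2.2.1 ∈ WIntDer Δ)
    (hbr : (bracketStar Δ g ξ).2.2.1 ∈ WIntDer Δ)
    (hk : ∀ l ∈ I, toFunc Δ φ ξ hξ l = 0) :
    ∀ l ∈ I, toFunc Δ φ (bracketStar Δ g ξ) hbr l = 0 := by
  intro l hl
  rw [hΔL g ξ hg hξ hbr l]
  obtain ⟨s, hs⟩ := hI l hl
  rw [← hs]
  clear hs
  have hz : ∀ y : ↥I, toFunc Δ φ ξ hξ (y : LKKT Δ) = 0 := fun y => hk y.1 y.2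
  induction s using TensorProduct.induction_on with
  | zero => simp
  | tmul x y => simp [pairT, TensorProduct.map_tmul, hz]
  | add u v hu hv => rw [map_add, map_add, hu, hv, add_zero]

end AuxL
section AuxM
variable {k : Type*} [Field k] {A : Type*} [AddCommGroup A] [Module k A]

theorem half_add (h2 : (2:k) ≠ 0) {V : Type*} [AddCommGroup V] [Module k V] (u : V) :
    (2:k)⁻¹ • (u + u) = u := by
  rw [← two_smul k u, smul_smul, inv_mul_cancel₀ h2, one_smul]

theorem kil_congr (Δ : A →ₗ[k] A ⊗[k] A)
    (φ : ↥(WIntDer Δ) →ₗ[k] (↥(CommAA Δ) →ₗ[k] k)) (I : Submodule k (LKKT Δ))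
    {f₁ f₂ g₁ g₂ : A →ₗ[k] k} {d e : ↥(WIntDer Δ)} {f₄ g₄ : A →ₗ[k] k}
    (h : Kil Δ φ I f₁ f₂ d f₄) (e₁ : f₁ = g₁) (e₂ : f₂ = g₂) (ed : d = e)
    (e₄ : f₄ = g₄) : Kil Δ φ I g₁ g₂ e g₄ := by
  subst e₁ e₂ ed e₄; exact h

theorem kil_neg (Δ : A →ₗ[k] A ⊗[k] A)
    (φ : ↥(WIntDer Δ) →ₗ[k] (↥(CommAA Δ) →ₗ[k] k)) (I : Submodule k (LKKT Δ))
    {f₁ f₂ : A →ₗ[k] k} {d : ↥(WIntDer Δ)} {f₄ : A →ₗ[k] k}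
    (h : Kil Δ φ I f₁ f₂ d f₄) : Kil Δ φ I (-f₁) (-f₂) (-d) (-f₄) := by
  intro l hl
  have hv := h l hl
  have hN : φ (-d) = -(φ d) := map_neg φ d
  simp only [LinearMap.neg_apply, hN]
  linear_combination -hv

theorem commD_neg_swap (Δ : A →ₗ[k] A ⊗[k] A) (f g : A →ₗ[k] k) :
    -(commD Δ f g) = commD Δ g f := by
  unfold commD; exact neg_sub _ _

theorem RopC_apply (Δ : A →ₗ[k] A ⊗[k] A) (x y : (A →ₗ[k] k) × A) :
    RopC Δ x y = cmul Δ y x := rfl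

theorem commMixed_apply (Δ : A →ₗ[k] A ⊗[k] A) (p : A →ₗ[k] k) (a : A)
    (h : A →ₗ[k] k) :
    commMixed Δ p a (h, 0)
      = (0, lact Δ (dmul Δ h p) a - lact Δ p (lact Δ h a)) := by
  simp [commMixed, commC, LinearMap.sub_apply, LinearMap.comp_apply, RopC_apply,
    cmul, dmul_zero_left, dmul_zero_right, Prod.ext_iff]

theorem memI_of (Δ : A →ₗ[k] A ⊗[k] A)
    (φ : ↥(WIntDer Δ) →ₗ[k] (↥(CommAA Δ) →ₗ[k] k)) (hφbij : Function.Bijective φ)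
    (I : Submodule k (LKKT Δ)) (x : LKKT Δ)
    (h : ∀ (f₁ f₂ : A →ₗ[k] k) (d : ↥(WIntDer Δ)) (f₄ : A →ₗ[k] k),
      Kil Δ φ I f₁ f₂ d f₄ → f₁ x.1 + f₂ x.2.1 + φ d x.2.2.1 + f₄ x.2.2.2 = 0) :
    x ∈ I := by
  refine mem_of_forall_dual I x ?_
  intro ζ hζ
  obtain ⟨d, hd⟩ := hφbij.2 (ζ ∘ₗ (LinearMap.prod 0 (LinearMap.prod 0
    (LinearMap.prod LinearMap.id 0))))
  set j1 : A →ₗ[k] LKKT Δ :=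
    LinearMap.prod LinearMap.id (LinearMap.prod 0 (LinearMap.prod 0 0)) with hj1
  set j2 : A →ₗ[k] LKKT Δ :=
    LinearMap.prod 0 (LinearMap.prod LinearMap.id (LinearMap.prod 0 0)) with hj2
  set j3 : ↥(CommAA Δ) →ₗ[k] LKKT Δ :=
    LinearMap.prod 0 (LinearMap.prod 0 (LinearMap.prod LinearMap.id 0)) with hj3
  set j4 : A →ₗ[k] LKKT Δ :=
    LinearMap.prod 0 (LinearMap.prod 0 (LinearMap.prod 0 LinearMap.id)) with hj4
  have hdecomp : ∀ l : LKKT Δ, j1 l.1 + j2 l.2.1 + j3 l.2.2.1 + j4 l.2.2.2 = l := by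
    intro l
    simp [hj1, hj2, hj3, hj4, LinearMap.prod_apply, Prod.ext_iff]
  have hrep : ∀ l : LKKT Δ, ζ l
      = (ζ ∘ₗ j1) l.1 + (ζ ∘ₗ j2) l.2.1 + φ d l.2.2.1 + (ζ ∘ₗ j4) l.2.2.2 := by
    intro l
    conv_lhs => rw [← hdecomp l]
    rw [map_add, map_add, map_add, hd]
    rfl
  rw [hrep x]
  exact h _ _ _ _ (fun l hl => by rw [← hrep l]; exact hζ l hl)

theorem phi_commD (Δ : A →ₗ[k] A ⊗[k] A) (hJ : IsJordanCoalgebra Δ)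
    (φ : ↥(WIntDer Δ) →ₗ[k] (↥(CommAA Δ) →ₗ[k] k))
    (hφ : ∀ (e : ↥(WIntDer Δ)) (f : A →ₗ[k] k) (a : A) (h : commMixed Δ f a ∈ CommAA Δ),
      φ e ⟨commMixed Δ f a, h⟩ = (e : ((A →ₗ[k] k) →ₗ[k] (A →ₗ[k] k))) f a)
    (q h : A →ₗ[k] k) (hm : commD Δ h q ∈ WIntDer Δ) (v : ↥(CommAA Δ)) :
    φ ⟨commD Δ h q, hm⟩ v
      = q (((v : ((A →ₗ[k] k) × A) →ₗ[k] ((A →ₗ[k] k) × A)) (h, 0)).2) := by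
  obtain ⟨u, hu⟩ := v
  have hu' : u ∈ Submodule.span k
      {w | ∃ (f : A →ₗ[k] k) (a : A), w = commMixed Δ f a} := hu
  have key : ∀ hx' : u ∈ CommAA Δ,
      φ ⟨commD Δ h q, hm⟩ ⟨u, hx'⟩ = q ((u (h, 0)).2) := by
    refine Submodule.span_induction
      (p := fun x _ => ∀ hx' : x ∈ CommAA Δ,
        φ ⟨commD Δ h q, hm⟩ ⟨x, hx'⟩ = q ((x (h, 0)).2)) ?_ ?_ ?_ ?_ hu'
    · rintro x ⟨p, a, rfl⟩ hx'
      rw [hφ ⟨commD Δ h q, hm⟩ p a hx', commMixed_apply, map_sub,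
        apply_lact, apply_lact, apply_lact]
      have hL : commD Δ h q p a
          = dmul Δ (dmul Δ p h) q a - dmul Δ (dmul Δ p q) h a := by
        simp [commD, LinearMap.sub_apply, LinearMap.comp_apply, Rop_apply]
      rw [hL, hJ.1 q (dmul Δ h p), hJ.1 h p, hJ.1 q p]
    · intro hx'
      rw [show (⟨(0 : ((A →ₗ[k] k) × A) →ₗ[k] ((A →ₗ[k] k) × A)), hx'⟩
        : ↥(CommAA Δ)) = 0 from rfl, map_zero]
      simp
    · intro x y hx hy ihx ihy hx'
      rw [show (⟨x + y, hx'⟩ : ↥(CommAA Δ)) = ⟨x, hx⟩ + ⟨y, hy⟩ from rfl, map_add]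
      simp only [LinearMap.add_apply, Prod.fst_add, Prod.snd_add, map_add]
      rw [ihx hx, ihy hy]
    · intro c x hx ih hx'
      rw [show (⟨c • x, hx'⟩ : ↥(CommAA Δ)) = c • ⟨x, hx⟩ from rfl, map_smul]
      simp only [LinearMap.smul_apply, Prod.smul_snd, map_smul, smul_eq_mul]
      rw [ih hx]
  exact key hu

theorem phi_span_vanish (Δ : A →ₗ[k] A ⊗[k] A)
    (φ : ↥(WIntDer Δ) →ₗ[k] (↥(CommAA Δ) →ₗ[k] k))
    (hφ : ∀ (e : ↥(WIntDer Δ)) (f : A →ₗ[k] k) (a : A) (h : commMixed Δ f a ∈ CommAA Δ),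
      φ e ⟨commMixed Δ f a, h⟩ = (e : ((A →ₗ[k] k) →ₗ[k] (A →ₗ[k] k))) f a)
    (B : Submodule k A) (d : ↥(WIntDer Δ))
    (hz : ∀ (p : A →ₗ[k] k) (b : A), b ∈ B →
      (d : ((A →ₗ[k] k) →ₗ[k] (A →ₗ[k] k))) p b = 0)
    (v : ↥(CommAA Δ))
    (hv : (v : ((A →ₗ[k] k) × A) →ₗ[k] ((A →ₗ[k] k) × A)) ∈
      Submodule.span k {u | ∃ f : A →ₗ[k] k, ∃ b ∈ B, u = commMixed Δ f b}) :
    φ d v = 0 := by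
  obtain ⟨u, hu⟩ := v
  have hle : Submodule.span k {u | ∃ f : A →ₗ[k] k, ∃ b ∈ B, u = commMixed Δ f b}
      ≤ CommAA Δ := by
    rw [Submodule.span_le]
    rintro x ⟨f, b, hb, rfl⟩
    exact Submodule.subset_span ⟨f, b, rfl⟩
  have key : ∀ hx' : u ∈ CommAA Δ, φ d ⟨u, hx'⟩ = 0 := by
    refine Submodule.span_induction
      (p := fun x _ => ∀ hx' : x ∈ CommAA Δ, φ d ⟨x, hx'⟩ = 0) ?_ ?_ ?_ ?_ hv
    · rintro x ⟨f, b, hb, rfl⟩ hx'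
      rw [hφ d f b hx']
      exact hz f b hb
    · intro hx'
      rw [show (⟨(0 : ((A →ₗ[k] k) × A) →ₗ[k] ((A →ₗ[k] k) × A)), hx'⟩
        : ↥(CommAA Δ)) = 0 from rfl, map_zero]
    · intro x y hx hy ihx ihy hx'
      rw [show (⟨x + y, hx'⟩ : ↥(CommAA Δ)) = ⟨x, hle hx⟩ + ⟨y, hle hy⟩ from rfl,
        map_add, ihx (hle hx), ihy (hle hy), add_zero]
    · intro c x hx ih hx'
      rw [show (⟨c • x, hx'⟩ : ↥(CommAA Δ)) = c • ⟨x, hle hx⟩ from rfl,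
        map_smul, ih (hle hx), smul_zero]
  exact key hu

end AuxM
set_option maxHeartbeats 2000000 in
set_option synthInstance.maxHeartbeats 2000000 in
/-- **Theorem 3 (second half).** If `I` is a subcoalgebra of the Lie coalgebra
`⟨L(A), Δ_L⟩` of Theorem 1, then `B = A ∩ I` is a subcoalgebra of `⟨A, Δ⟩` and
`I₁*(B) ⊆ I ⊆ I₂*(B)`. -/
theorem theorem3_converse {k : Type*} [Field k] {A : Type*} [AddCommGroup A] [Module k A]
    (h2 : (2 : k) ≠ 0) (Δ : A →ₗ[k] A ⊗[k] A) (hJ : IsJordanCoalgebra Δ)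
    (one : A →ₗ[k] k) (hone : ∀ f, dmul Δ one f = f ∧ dmul Δ f one = f)
    (φ : ↥(WIntDer Δ) →ₗ[k] (↥(CommAA Δ) →ₗ[k] k))
    (hφ : ∀ (e : ↥(WIntDer Δ)) (f : A →ₗ[k] k) (a : A) (h : commMixed Δ f a ∈ CommAA Δ),
      φ e ⟨commMixed Δ f a, h⟩ = (e : ((A →ₗ[k] k) →ₗ[k] (A →ₗ[k] k))) f a)
    (hφbij : Function.Bijective φ)
    (ΔL : LKKT Δ →ₗ[k] (LKKT Δ ⊗[k] LKKT Δ))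
    (hΔL : ∀ (f g : (A →ₗ[k] k) × (A →ₗ[k] k) ×
          ((A →ₗ[k] k) →ₗ[k] (A →ₗ[k] k)) × (A →ₗ[k] k))
      (hf : f.2.2.1 ∈ WIntDer Δ) (hg : g.2.2.1 ∈ WIntDer Δ)
      (hbr : (bracketStar Δ f g).2.2.1 ∈ WIntDer Δ) (l : LKKT Δ),
      toFunc Δ φ (bracketStar Δ f g) hbr l
        = pairT (M := LKKT Δ) (toFunc Δ φ f hf) (toFunc Δ φ g hg) (ΔL l))
    (I : Submodule k (LKKT Δ)) (hI : IsSubcoalgebra (A := LKKT Δ) ΔL I) :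
    IsSubcoalgebra Δ (Submodule.comap (inclA Δ) I) ∧
    I1star Δ (Submodule.comap (inclA Δ) I) ≤ I ∧
    I ≤ I2star Δ (Submodule.comap (inclA Δ) I) := by
  classical
  have hone1 : ∀ f, dmul Δ one f = f := fun f => (hone f).1
  have hone2 : ∀ f, dmul Δ f one = f := fun f => (hone f).2
  have hwd : ∀ p q : A →ₗ[k] k, commD Δ p q ∈ WIntDer Δ := by
    intro p q
    refine ⟨commD_isDerivation h2 Δ hJ p q,
      fun B' _ _ => ⟨commD Δ p q, ?_, fun f b _ => rfl⟩⟩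
    exact Submodule.subset_span ⟨p, q, rfl⟩
  have hder_one : ∀ d : ↥(WIntDer Δ),
      (d : (A →ₗ[k] k) →ₗ[k] (A →ₗ[k] k)) one = 0 := by
    intro d
    have hdw : IsWIntDer Δ (d : (A →ₗ[k] k) →ₗ[k] (A →ₗ[k] k)) := d.2
    have hd := hdw.1 one one
    rw [hone1 one, hone2 ((d : (A →ₗ[k] k) →ₗ[k] (A →ₗ[k] k)) one),
      hone1 ((d : (A →ₗ[k] k) →ₗ[k] (A →ₗ[k] k)) one)] at hd
    nth_rewrite 1 [← add_zero ((d : (A →ₗ[k] k) →ₗ[k] (A →ₗ[k] k)) one)] at hd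
    exact (add_left_cancel hd).symm
  -- move 1 : bracket with (0, one, 0, 0)
  have move1 : ∀ (f₁ f₂ : A →ₗ[k] k) (d : ↥(WIntDer Δ)) (f₄ : A →ₗ[k] k),
      Kil Δ φ I f₁ f₂ d f₄ → Kil Δ φ I f₁ 0 0 (-f₄) := by
    intro f₁ f₂ d f₄ hk
    have hbq : bracketStar Δ (f₁, f₂, (d : (A →ₗ[k] k) →ₗ[k] (A →ₗ[k] k)), f₄)
        (0, one, 0, 0)
        = (f₁, 0, (0 : (A →ₗ[k] k) →ₗ[k] (A →ₗ[k] k)), -f₄) := by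
      simp [bracketStar, Prod.ext_iff, hone1, hone2, hder_one d, commD_zero_left,
        commD_zero_right, commD_one_left Δ one hone2, commD_one_right Δ one hone2,
        dmul_zero_left, dmul_zero_right]
    have hbr : (bracketStar Δ (f₁, f₂, (d : (A →ₗ[k] k) →ₗ[k] (A →ₗ[k] k)), f₄)
        (0, one, 0, 0)).2.2.1 ∈ WIntDer Δ := by
      rw [hbq]; exact Submodule.zero_mem _
    have hres := kil_bracket_left Δ φ ΔL hΔL I hI
      (f₁, f₂, (d : (A →ₗ[k] k) →ₗ[k] (A →ₗ[k] k)), f₄) (0, one, 0, 0)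
      d.2 (Submodule.zero_mem _) hbr ((kil_toFunc Δ φ I f₁ f₂ d f₄).mp hk)
    intro l hl
    have hv := hres l hl
    rw [toFunc_apply] at hv
    simp only [hbq] at hv
    exact hv
  -- move 2 : bracket with (one, 0, 0, 0)
  have move2 : ∀ (f₁ f₂ : A →ₗ[k] k) (d : ↥(WIntDer Δ)) (f₄ : A →ₗ[k] k),
      Kil Δ φ I f₁ f₂ d f₄ → Kil Δ φ I (-f₂) (-f₄) 0 0 := by
    intro f₁ f₂ d f₄ hk
    have hbq : bracketStar Δ (f₁, f₂, (d : (A →ₗ[k] k) →ₗ[k] (A →ₗ[k] k)), f₄)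
        (one, 0, 0, 0)
        = (-f₂, -f₄, (0 : (A →ₗ[k] k) →ₗ[k] (A →ₗ[k] k)), 0) := by
      simp [bracketStar, Prod.ext_iff, hone1, hone2, hder_one d, commD_zero_left,
        commD_zero_right, commD_one_left Δ one hone2, commD_one_right Δ one hone2,
        dmul_zero_left, dmul_zero_right]
    have hbr : (bracketStar Δ (f₁, f₂, (d : (A →ₗ[k] k) →ₗ[k] (A →ₗ[k] k)), f₄)
        (one, 0, 0, 0)).2.2.1 ∈ WIntDer Δ := by
      rw [hbq]; exact Submodule.zero_mem _
    have hres := kil_bracket_left Δ φ ΔL hΔL I hI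
      (f₁, f₂, (d : (A →ₗ[k] k) →ₗ[k] (A →ₗ[k] k)), f₄) (one, 0, 0, 0)
      d.2 (Submodule.zero_mem _) hbr ((kil_toFunc Δ φ I f₁ f₂ d f₄).mp hk)
    intro l hl
    have hv := hres l hl
    rw [toFunc_apply] at hv
    simp only [hbq] at hv
    exact hv
  -- move 3 : bracket with (0, 0, 0, one)
  have move3 : ∀ (f₁ f₂ : A →ₗ[k] k) (d : ↥(WIntDer Δ)) (f₄ : A →ₗ[k] k),
      Kil Δ φ I f₁ f₂ d f₄ → Kil Δ φ I 0 f₁ 0 f₂ := by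
    intro f₁ f₂ d f₄ hk
    have hbq : bracketStar Δ (f₁, f₂, (d : (A →ₗ[k] k) →ₗ[k] (A →ₗ[k] k)), f₄)
        (0, 0, 0, one)
        = (0, f₁, (0 : (A →ₗ[k] k) →ₗ[k] (A →ₗ[k] k)), f₂) := by
      simp [bracketStar, Prod.ext_iff, hone1, hone2, hder_one d, commD_zero_left,
        commD_zero_right, commD_one_left Δ one hone2, commD_one_right Δ one hone2,
        dmul_zero_left, dmul_zero_right]
    have hbr : (bracketStar Δ (f₁, f₂, (d : (A →ₗ[k] k) →ₗ[k] (A →ₗ[k] k)), f₄)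
        (0, 0, 0, one)).2.2.1 ∈ WIntDer Δ := by
      rw [hbq]; exact Submodule.zero_mem _
    have hres := kil_bracket_left Δ φ ΔL hΔL I hI
      (f₁, f₂, (d : (A →ₗ[k] k) →ₗ[k] (A →ₗ[k] k)), f₄) (0, 0, 0, one)
      d.2 (Submodule.zero_mem _) hbr ((kil_toFunc Δ φ I f₁ f₂ d f₄).mp hk)
    intro l hl
    have hv := hres l hl
    rw [toFunc_apply] at hv
    simp only [hbq] at hv
    exact hv
  -- move 4 : bracket with (h, 0, 0, 0)
  have move4 : ∀ (f₁ f₂ : A →ₗ[k] k) (d : ↥(WIntDer Δ)) (f₄ : A →ₗ[k] k),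
      Kil Δ φ I f₁ f₂ d f₄ → ∀ h : A →ₗ[k] k,
      Kil Δ φ I (-(dmul Δ h f₂) - (d : (A →ₗ[k] k) →ₗ[k] (A →ₗ[k] k)) h)
        (-(dmul Δ h f₄)) ⟨commD Δ h f₄, hwd h f₄⟩ 0 := by
    intro f₁ f₂ d f₄ hk h
    have hbq : bracketStar Δ (f₁, f₂, (d : (A →ₗ[k] k) →ₗ[k] (A →ₗ[k] k)), f₄)
        (h, 0, 0, 0)
        = (-(dmul Δ h f₂) - (d : (A →ₗ[k] k) →ₗ[k] (A →ₗ[k] k)) h,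
           -(dmul Δ h f₄), commD Δ h f₄, 0) := by
      simp [bracketStar, Prod.ext_iff, commD_zero_left, commD_zero_right,
        dmul_zero_left, dmul_zero_right]
    have hbr : (bracketStar Δ (f₁, f₂, (d : (A →ₗ[k] k) →ₗ[k] (A →ₗ[k] k)), f₄)
        (h, 0, 0, 0)).2.2.1 ∈ WIntDer Δ := by
      rw [hbq]; exact hwd h f₄
    have hres := kil_bracket_left Δ φ ΔL hΔL I hI
      (f₁, f₂, (d : (A →ₗ[k] k) →ₗ[k] (A →ₗ[k] k)), f₄) (h, 0, 0, 0)
      d.2 (Submodule.zero_mem _) hbr ((kil_toFunc Δ φ I f₁ f₂ d f₄).mp hk)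
    intro l hl
    have hv := hres l hl
    rw [toFunc_apply] at hv
    simp only [hbq] at hv
    exact hv
  -- move 5 : bracket with (0, 0, 0, h)
  have move5 : ∀ (f₁ f₂ : A →ₗ[k] k) (d : ↥(WIntDer Δ)) (f₄ : A →ₗ[k] k),
      Kil Δ φ I f₁ f₂ d f₄ → ∀ h : A →ₗ[k] k,
      Kil Δ φ I 0 (dmul Δ f₁ h) (-(⟨commD Δ f₁ h, hwd f₁ h⟩ : ↥(WIntDer Δ)))
        (dmul Δ h f₂ - (d : (A →ₗ[k] k) →ₗ[k] (A →ₗ[k] k)) h) := by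
    intro f₁ f₂ d f₄ hk h
    have hbq : bracketStar Δ (f₁, f₂, (d : (A →ₗ[k] k) →ₗ[k] (A →ₗ[k] k)), f₄)
        (0, 0, 0, h)
        = (0, dmul Δ f₁ h, -(commD Δ f₁ h),
           dmul Δ h f₂ - (d : (A →ₗ[k] k) →ₗ[k] (A →ₗ[k] k)) h) := by
      simp [bracketStar, Prod.ext_iff, commD_zero_left, commD_zero_right,
        dmul_zero_left, dmul_zero_right]
    have hbr : (bracketStar Δ (f₁, f₂, (d : (A →ₗ[k] k) →ₗ[k] (A →ₗ[k] k)), f₄)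
        (0, 0, 0, h)).2.2.1 ∈ WIntDer Δ := by
      rw [hbq]; exact Submodule.neg_mem _ (hwd f₁ h)
    have hres := kil_bracket_left Δ φ ΔL hΔL I hI
      (f₁, f₂, (d : (A →ₗ[k] k) →ₗ[k] (A →ₗ[k] k)), f₄) (0, 0, 0, h)
      d.2 (Submodule.zero_mem _) hbr ((kil_toFunc Δ φ I f₁ f₂ d f₄).mp hk)
    intro l hl
    have hv := hres l hl
    rw [toFunc_apply] at hv
    simp only [hbq] at hv
    exact hv
  -- move 6 : bracket with (0, h, 0, 0)
  have move6 : ∀ (f₁ f₂ : A →ₗ[k] k) (d : ↥(WIntDer Δ)) (f₄ : A →ₗ[k] k),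
      Kil Δ φ I f₁ f₂ d f₄ → ∀ h : A →ₗ[k] k,
      Kil Δ φ I (dmul Δ f₁ h) (-((d : (A →ₗ[k] k) →ₗ[k] (A →ₗ[k] k)) h))
        ⟨commD Δ f₂ h, hwd f₂ h⟩ (-(dmul Δ f₄ h)) := by
    intro f₁ f₂ d f₄ hk h
    have hbq : bracketStar Δ (f₁, f₂, (d : (A →ₗ[k] k) →ₗ[k] (A →ₗ[k] k)), f₄)
        (0, h, 0, 0)
        = (dmul Δ f₁ h, -((d : (A →ₗ[k] k) →ₗ[k] (A →ₗ[k] k)) h),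
           commD Δ f₂ h, -(dmul Δ f₄ h)) := by
      simp [bracketStar, Prod.ext_iff, commD_zero_left, commD_zero_right,
        dmul_zero_left, dmul_zero_right]
    have hbr : (bracketStar Δ (f₁, f₂, (d : (A →ₗ[k] k) →ₗ[k] (A →ₗ[k] k)), f₄)
        (0, h, 0, 0)).2.2.1 ∈ WIntDer Δ := by
      rw [hbq]; exact hwd f₂ h
    have hres := kil_bracket_left Δ φ ΔL hΔL I hI
      (f₁, f₂, (d : (A →ₗ[k] k) →ₗ[k] (A →ₗ[k] k)), f₄) (0, h, 0, 0)
      d.2 (Submodule.zero_mem _) hbr ((kil_toFunc Δ φ I f₁ f₂ d f₄).mp hk)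
    intro l hl
    have hv := hres l hl
    rw [toFunc_apply] at hv
    simp only [hbq] at hv
    exact hv
  -- splitting a functional annihilating I into its pure components
  have split : ∀ (f₁ f₂ : A →ₗ[k] k) (d : ↥(WIntDer Δ)) (f₄ : A →ₗ[k] k),
      Kil Δ φ I f₁ f₂ d f₄ →
      Kil Δ φ I f₁ 0 0 0 ∧ Kil Δ φ I f₂ 0 0 0 ∧ Kil Δ φ I 0 0 d 0 ∧
        Kil Δ φ I f₄ 0 0 0 := by
    intro f₁ f₂ d f₄ hk
    have kA := move1 f₁ f₂ d f₄ hk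
    have kB : Kil Δ φ I f₁ 0 0 f₄ :=
      kil_congr Δ φ I (move1 f₁ 0 0 (-f₄) kA) rfl rfl rfl (neg_neg f₄)
    have p1 : Kil Δ φ I f₁ 0 0 0 :=
      kil_congr Δ φ I (kil_smul Δ φ I ((2:k)⁻¹) (kil_add Δ φ I kA kB))
        (half_add h2 f₁) (by module) (by module) (by module)
    have p4' : Kil Δ φ I 0 0 0 f₄ :=
      kil_congr Δ φ I (kil_smul Δ φ I ((2:k)⁻¹) (kil_sub Δ φ I kB kA))
        (by module) (by module) (by module)
        (by rw [sub_neg_eq_add]; exact half_add h2 f₄)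
    have rest : Kil Δ φ I 0 f₂ d 0 :=
      kil_congr Δ φ I (kil_sub Δ φ I (kil_sub Δ φ I hk p1) p4')
        (by module) (by module) (by module) (by module)
    have p2 : Kil Δ φ I f₂ 0 0 0 :=
      kil_congr Δ φ I (kil_neg Δ φ I (move2 0 f₂ d 0 rest))
        (neg_neg f₂) (by module) (by module) (by module)
    have p2b : Kil Δ φ I 0 f₂ 0 0 := move3 f₂ 0 0 0 p2
    have pD : Kil Δ φ I 0 0 d 0 :=
      kil_congr Δ φ I (kil_sub Δ φ I rest p2b) (by module) (by module) (by module)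
        (by module)
    have p4a : Kil Δ φ I 0 (-f₄) 0 0 :=
      kil_congr Δ φ I (move2 0 0 0 f₄ p4') (by module) rfl rfl rfl
    have p4 : Kil Δ φ I f₄ 0 0 0 :=
      kil_congr Δ φ I (move2 0 (-f₄) 0 0 p4a) (neg_neg f₄) (by module) rfl rfl
    exact ⟨p1, p2, pD, p4⟩
  have hS4 : ∀ q : A →ₗ[k] k, Kil Δ φ I q 0 0 0 → Kil Δ φ I 0 0 0 q := by
    intro q hq
    exact move3 0 q 0 0 (move3 q 0 0 0 hq)
  have hSm : ∀ q : A →ₗ[k] k, Kil Δ φ I q 0 0 0 → ∀ h : A →ₗ[k] k,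
      Kil Δ φ I (dmul Δ q h) 0 0 0 := by
    intro q hq h
    exact kil_congr Δ φ I (move6 q 0 0 0 hq h) rfl (by simp)
      (Subtype.ext (commD_zero_left Δ h)) (by simp [dmul_zero_left])
  have hs3 : ∀ (d : ↥(WIntDer Δ)), Kil Δ φ I 0 0 d 0 → ∀ h : A →ₗ[k] k,
      Kil Δ φ I (-((d : (A →ₗ[k] k) →ₗ[k] (A →ₗ[k] k)) h)) 0 0 0 := by
    intro d hd h
    exact kil_congr Δ φ I (move4 0 0 d 0 hd h) (by simp [dmul_zero_right])
      (by simp [dmul_zero_right]) (Subtype.ext (commD_zero_right Δ h)) rfl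
  have hs2 : ∀ (q : A →ₗ[k] k), Kil Δ φ I q 0 0 0 → ∀ h : A →ₗ[k] k,
      Kil Δ φ I 0 0 ⟨commD Δ h q, hwd h q⟩ 0 := by
    intro q hq h
    have a : Kil Δ φ I 0 (dmul Δ q h)
        (-(⟨commD Δ q h, hwd q h⟩ : ↥(WIntDer Δ))) 0 :=
      kil_congr Δ φ I (move5 q 0 0 0 hq h) rfl rfl rfl (by simp [dmul_zero_right])
    have b : Kil Δ φ I 0 (-(dmul Δ h q)) ⟨commD Δ h q, hwd h q⟩ 0 :=
      kil_congr Δ φ I (move4 0 0 0 q (hS4 q hq) h) (by simp [dmul_zero_right])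
        rfl rfl rfl
    have c := kil_add Δ φ I a b
    refine kil_congr Δ φ I (kil_smul Δ φ I ((2:k)⁻¹) c) (by module)
      (by rw [hJ.1 q h]; module) ?_ (by module)
    apply Subtype.ext
    show (2:k)⁻¹ • (-(commD Δ q h) + commD Δ h q) = commD Δ h q
    rw [commD_neg_swap]
    exact half_add h2 _
  -- characterization of B = A ∩ I
  have hBiff : ∀ x : A, x ∈ Submodule.comap (inclA Δ) I ↔
      (∀ q : A →ₗ[k] k, Kil Δ φ I q 0 0 0 → q x = 0) := by
    intro x
    constructor
    · intro hx q hq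
      have hv := hq (inclA Δ x) (Submodule.mem_comap.mp hx)
      simpa [inclA] using hv
    · intro hx
      rw [Submodule.mem_comap]
      refine memI_of Δ φ hφbij I _ ?_
      intro f₁ f₂ d f₄ hk
      have sp := split f₁ f₂ d f₄ hk
      simpa [inclA] using hx f₁ sp.1
  refine ⟨?_, ?_, ?_⟩
  · -- B is a subcoalgebra
    intro b hb
    apply mem_range_map_subtype
    · intro q h hqB
      have h1 : pairT q h (Δ b) = q (lact Δ h b) := by rw [apply_lact]; rfl
      rw [h1]
      apply hqB
      refine (hBiff _).mpr ?_
      intro q' hq'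
      rw [apply_lact]
      exact (hBiff b).mp hb (dmul Δ q' h) (hSm q' hq' h)
    · intro q h hqB
      have h1 : pairT h q (Δ b) = q (ract Δ h b) := by rw [apply_ract]; rfl
      rw [h1]
      apply hqB
      refine (hBiff _).mpr ?_
      intro q' hq'
      rw [apply_ract, hJ.1 h q']
      exact (hBiff b).mp hb (dmul Δ q' h) (hSm q' hq' h)
  · -- I1star B ≤ I
    intro x hx
    obtain ⟨hb1, hrest⟩ := Submodule.mem_prod.mp hx
    obtain ⟨hb2, hrest2⟩ := Submodule.mem_prod.mp hrest
    obtain ⟨hb3, hb4⟩ := Submodule.mem_prod.mp hrest2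
    refine memI_of Δ φ hφbij I _ ?_
    intro f₁ f₂ d f₄ hk
    obtain ⟨p1, p2, pD, p4⟩ := split f₁ f₂ d f₄ hk
    have e1 : f₁ x.1 = 0 := (hBiff x.1).mp hb1 f₁ p1
    have e2 : f₂ x.2.1 = 0 := (hBiff x.2.1).mp hb2 f₂ p2
    have e4 : f₄ x.2.2.2 = 0 := (hBiff x.2.2.2).mp hb4 f₄ p4
    have e3 : φ d x.2.2.1 = 0 := by
      refine phi_span_vanish Δ φ hφ (Submodule.comap (inclA Δ) I) d ?_ x.2.2.1
        (Submodule.mem_comap.mp hb3)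
      intro p b hb
      have hv := (hBiff b).mp hb
        (-((d : (A →ₗ[k] k) →ₗ[k] (A →ₗ[k] k)) p)) (hs3 d pD p)
      simpa using hv
    rw [e1, e2, e3, e4]
    simp
  · -- I ≤ I2star B
    intro l hl
    refine Submodule.mem_prod.mpr ⟨?_, Submodule.mem_prod.mpr ⟨?_,
      Submodule.mem_prod.mpr ⟨?_, ?_⟩⟩⟩
    · refine (hBiff l.1).mpr ?_
      intro q hq
      have hv := hq l hl
      simpa using hv
    · refine (hBiff l.2.1).mpr ?_
      intro q hq
      have hv := (move3 q 0 0 0 hq) l hl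
      simpa using hv
    · show ∀ f : A →ₗ[k] k,
        (((l.2.2.1 : ((A →ₗ[k] k) × A) →ₗ[k] ((A →ₗ[k] k) × A))) (f, 0)).2
          ∈ Submodule.comap (inclA Δ) I
      intro f
      refine (hBiff _).mpr ?_
      intro q hq
      rw [← phi_commD Δ hJ φ hφ q f (hwd f q) l.2.2.1]
      have hv := (hs2 q hq f) l hl
      simpa using hv
    · refine (hBiff l.2.2.2).mpr ?_
      intro q hq
      have hv := (hS4 q hq) l hl
      simpa using hv
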